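/- Fix a real number p with 0 < p < ∞ and let ψ(t) = (1 + (t + √(t²+4t))/2)^{p/2} + (1 + (t − √(t²+4t))/2)^{p/2} for t ≥ 0, and λ_n = (2/(2n)!) ∏_{k=0}^{n−1} (p²/4 − k²). Then for every t ≥ 0 and every integer N ≥ 0: ψ(t) − Σ_{n=0}^N λ_n tⁿ ≥ 0 if p ≥ 2N or ⌊N − p/2⌋ is odd, and ψ(t) − Σ_{n=0}^N λ_n tⁿ ≤ 0 otherwise. -/

import Mathlib

/-- The function `ψ(t) = (1 + (t + √(t²+4t))/2)^{p/2} + (1 + (t − √(t²+4t))/2)^{p/2}`. -/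
noncomputable def psiFun (p : ℝ) (t : ℝ) : ℝ :=
  (1 + (t + Real.sqrt (t ^ 2 + 4 * t)) / 2) ^ (p / 2) +
    (1 + (t - Real.sqrt (t ^ 2 + 4 * t)) / 2) ^ (p / 2)

/-- The coefficients `λ_n = (2/(2n)!) ∏_{k=0}^{n−1} (p²/4 − k²)`. -/
noncomputable def psiCoeff (p : ℝ) (n : ℕ) : ℝ :=
  (2 / Nat.factorial (2 * n)) * ∏ k ∈ Finset.range n, (p ^ 2 / 4 - (k : ℝ) ^ 2)

noncomputable def wf (t : ℝ) : ℝ := Real.sqrt (t ^ 2 + 4 * t)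
noncomputable def xf (t : ℝ) : ℝ := 1 + (t + wf t) / 2
noncomputable def yf (t : ℝ) : ℝ := 1 + (t - wf t) / 2
noncomputable def muC (p : ℝ) (n : ℕ) : ℝ := (4 / p) * (n + 1) * psiCoeff p (n + 1)
noncomputable def aP (p : ℝ) (N : ℕ) (t : ℝ) : ℝ := ∑ n ∈ Finset.range (N + 1), psiCoeff p n * t ^ n
noncomputable def bP (p : ℝ) (N : ℕ) (t : ℝ) : ℝ := ∑ n ∈ Finset.range N, muC p n * t ^ n
noncomputable def SAf (p : ℝ) (N : ℕ) (t : ℝ) : ℝ := psiFun p t - aP p N t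
noncomputable def SDf (p : ℝ) (N : ℕ) (t : ℝ) : ℝ :=
  (xf t ^ (p / 2) - yf t ^ (p / 2)) - (wf t / 2) * bP p N t
noncomputable def cC (p : ℝ) (N : ℕ) : ℝ := (2 * N + 1) * muC p N

lemma psiCoeff_zero (p : ℝ) : psiCoeff p 0 = 2 := by
  simp [psiCoeff]

lemma coeff_rec (p : ℝ) (n : ℕ) :
    (2 * (n : ℝ) + 1) * (2 * n + 2) * psiCoeff p (n + 1) =
      (p ^ 2 / 4 - (n : ℝ) ^ 2) * psiCoeff p n := by
  have h2 : 2 * (n + 1) = (2 * n + 1) + 1 := by ring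
  have h1 : (2 * n + 1) = (2 * n) + 1 := rfl
  have hfac : (Nat.factorial (2 * (n + 1)) : ℝ) =
      ((2 * n + 2 : ℕ) : ℝ) * ((2 * n + 1 : ℕ) : ℝ) * (Nat.factorial (2 * n) : ℝ) := by
    rw [h2, Nat.factorial_succ, Nat.factorial_succ]
    push_cast
    ring
  have hne : (Nat.factorial (2 * n) : ℝ) ≠ 0 := by
    exact_mod_cast Nat.factorial_ne_zero (2 * n)
  simp only [psiCoeff, Finset.prod_range_succ, hfac]
  push_cast
  field_simp

lemma coeff_succ_eq (p : ℝ) (hp : p ≠ 0) (n : ℕ) :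
    psiCoeff p (n + 1) * ((n : ℝ) + 1) = (p / 4) * muC p n := by
  unfold muC; field_simp

lemma da_eq (p : ℝ) (hp : p ≠ 0) (N : ℕ) (t : ℝ) :
    ∑ n ∈ Finset.range (N + 1), psiCoeff p n * ((n : ℝ) * t ^ (n - 1)) = (p / 4) * bP p N t := by
  rw [Finset.sum_range_succ' (fun n => psiCoeff p n * ((n : ℝ) * t ^ (n - 1))) N]
  simp only [Nat.cast_zero, zero_mul, mul_zero, add_zero, Nat.cast_add, Nat.cast_one,
    Nat.add_sub_cancel]
  rw [bP, Finset.mul_sum]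
  apply Finset.sum_congr rfl
  intro n _
  unfold muC
  field_simp

lemma polyid (p : ℝ) (hp : p ≠ 0) (N : ℕ) (t : ℝ) :
    (t + 2) * bP p N t + (t ^ 2 + 4 * t) * (∑ n ∈ Finset.range N, muC p n * ((n : ℝ) * t ^ (n - 1)))
      = p * aP p N t - 2 * cC p N * t ^ N := by
  have hterm : ∀ n : ℕ, (t + 2) * (muC p n * t ^ n)
      + (t ^ 2 + 4 * t) * (muC p n * ((n : ℝ) * t ^ (n - 1)))
      = muC p n * (((n : ℝ) + 1) * t ^ (n + 1)) + muC p n * ((4 * n + 2) * t ^ n) := by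
    intro n
    cases n with
    | zero => push_cast; ring
    | succ m =>
      have : (m + 1 : ℕ) - 1 = m := rfl
      rw [this]
      push_cast
      ring
  have hLHS : (t + 2) * bP p N t
      + (t ^ 2 + 4 * t) * (∑ n ∈ Finset.range N, muC p n * ((n : ℝ) * t ^ (n - 1)))
      = (∑ n ∈ Finset.range N, muC p n * (((n : ℝ) + 1) * t ^ (n + 1)))
        + ∑ n ∈ Finset.range N, muC p n * ((4 * n + 2) * t ^ n) := by
    rw [bP, Finset.mul_sum, Finset.mul_sum, ← Finset.sum_add_distrib, ← Finset.sum_add_distrib]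
    exact Finset.sum_congr rfl fun n _ => hterm n
  rw [hLHS]
  -- first sum reindex
  have h1 : (∑ n ∈ Finset.range N, muC p n * (((n : ℝ) + 1) * t ^ (n + 1)))
      = ∑ n ∈ Finset.range (N + 1), (n : ℝ) * muC p (n - 1) * t ^ n := by
    rw [Finset.sum_range_succ' (fun n => (n : ℝ) * muC p (n - 1) * t ^ n) N]
    simp only [Nat.cast_zero, zero_mul, add_zero, Nat.add_sub_cancel, Nat.cast_add, Nat.cast_one]
    exact Finset.sum_congr rfl fun n _ => by ring
  have h2 : (∑ n ∈ Finset.range N, muC p n * ((4 * (n : ℝ) + 2) * t ^ n))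
      = (∑ n ∈ Finset.range (N + 1), muC p n * ((4 * (n : ℝ) + 2) * t ^ n))
        - muC p N * ((4 * N + 2) * t ^ N) := by
    rw [Finset.sum_range_succ]; ring
  rw [h1, h2]
  have h3 : (∑ n ∈ Finset.range (N + 1), (n : ℝ) * muC p (n - 1) * t ^ n)
      + (∑ n ∈ Finset.range (N + 1), muC p n * ((4 * (n : ℝ) + 2) * t ^ n))
      = p * aP p N t := by
    rw [aP, Finset.mul_sum, ← Finset.sum_add_distrib]
    apply Finset.sum_congr rfl
    intro n _
    cases n with
    | zero =>
      simp only [Nat.cast_zero, zero_mul, zero_add, pow_zero, mul_one, Nat.zero_sub]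
      rw [psiCoeff_zero]
      unfold muC
      have h1 : psiCoeff p 1 = p ^ 2 / 4 * (2 / 2) := by
        have := coeff_rec p 0
        rw [psiCoeff_zero] at this
        push_cast at this
        nlinarith [this]
      rw [h1]
      field_simp
      ring
    | succ m =>
      have hm : (m + 1 : ℕ) - 1 = m := rfl
      rw [hm]
      have hrec := coeff_rec p (m + 1)
      push_cast at hrec
      unfold muC
      push_cast
      field_simp
      linear_combination (4 * t^(m+1)) * hrec
  linarith [h3, (by unfold cC; ring : muC p N * ((4 * (N:ℝ) + 2) * t ^ N) = 2 * cC p N * t ^ N)]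

section basic
variable {t : ℝ}

lemma wf_nonneg (t : ℝ) : 0 ≤ wf t := Real.sqrt_nonneg _
lemma wf_sq (ht : 0 ≤ t) : wf t ^ 2 = t ^ 2 + 4 * t := by
  rw [wf, Real.sq_sqrt]; nlinarith
lemma wf_pos (ht : 0 < t) : 0 < wf t := by
  rw [wf]; apply Real.sqrt_pos.2; nlinarith
lemma xf_pos (ht : 0 ≤ t) : 0 < xf t := by
  have := wf_nonneg t; rw [xf]; linarith
lemma yf_pos (ht : 0 ≤ t) : 0 < yf t := by
  have h1 : xf t * yf t = 1 := by
    have := wf_sq ht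
    rw [xf, yf]; nlinarith
  have hx := xf_pos ht
  nlinarith
lemma xf_one : xf 0 = 1 := by simp [xf, wf]
lemma yf_one : yf 0 = 1 := by simp [yf, wf]
lemma wf_zero : wf 0 = 0 := by simp [wf]

lemma hasDerivAt_wf (ht : 0 < t) : HasDerivAt wf ((t + 2) / wf t) t := by
  have hw := wf_pos ht
  have hg : HasDerivAt (fun s : ℝ => s ^ 2 + 4 * s) (2 * t + 4) t := by
    simpa using ((hasDerivAt_pow 2 t).fun_add ((hasDerivAt_id t).const_mul 4))
  have := hg.sqrt (by nlinarith : t ^ 2 + 4 * t ≠ 0)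
  convert! this using 1
  rw [wf]
  rw [show Real.sqrt (t^2+4*t) = wf t from rfl]
  field_simp
  ring
lemma hasDerivAt_xf (ht : 0 < t) : HasDerivAt xf (xf t / wf t) t := by
  have hw := wf_pos ht
  have : HasDerivAt xf ((1 + (t + 2) / wf t) / 2) t := by
    have := ((hasDerivAt_id t).add (hasDerivAt_wf ht)).div_const 2
    exact (this.const_add 1)
  convert this using 1
  rw [xf]
  field_simp
  ring
lemma hasDerivAt_yf (ht : 0 < t) : HasDerivAt yf (-(yf t / wf t)) t := by
  have hw := wf_pos ht
  have : HasDerivAt yf ((1 - (t + 2) / wf t) / 2) t := by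
    have := ((hasDerivAt_id t).sub (hasDerivAt_wf ht)).div_const 2
    exact (this.const_add 1)
  convert this using 1
  rw [yf]
  field_simp
  ring

lemma hasDerivAt_xfp (p : ℝ) (ht : 0 < t) :
    HasDerivAt (fun s => xf s ^ (p / 2)) ((p / 2) * xf t ^ (p / 2) / wf t) t := by
  have hx := xf_pos ht.le
  have hw := wf_pos ht
  have := (hasDerivAt_xf ht).rpow_const (p := p/2) (Or.inl hx.ne')
  convert this using 1
  have h1 : xf t ^ (p / 2 - 1) * xf t = xf t ^ (p / 2) := by
    rw [← Real.rpow_add_one hx.ne']; ring_nf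
  rw [← h1]
  field_simp
lemma hasDerivAt_yfp (p : ℝ) (ht : 0 < t) :
    HasDerivAt (fun s => yf s ^ (p / 2)) (-((p / 2) * yf t ^ (p / 2) / wf t)) t := by
  have hy := yf_pos ht.le
  have hw := wf_pos ht
  have := (hasDerivAt_yf ht).rpow_const (p := p/2) (Or.inl hy.ne')
  convert this using 1
  have h1 : yf t ^ (p / 2 - 1) * yf t = yf t ^ (p / 2) := by
    rw [← Real.rpow_add_one hy.ne']; ring_nf
  rw [← h1]
  field_simp

lemma hasDerivAt_aP (p : ℝ) (hp : p ≠ 0) (N : ℕ) (ht : 0 < t) :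
    HasDerivAt (aP p N) ((p / 4) * bP p N t) t := by
  rw [← da_eq p hp N t]
  exact HasDerivAt.fun_sum fun n _ => ((hasDerivAt_pow n t).const_mul (psiCoeff p n))
lemma hasDerivAt_bP (p : ℝ) (N : ℕ) (t : ℝ) :
    HasDerivAt (bP p N) (∑ n ∈ Finset.range N, muC p n * ((n : ℝ) * t ^ (n - 1))) t :=
  HasDerivAt.fun_sum fun n _ => ((hasDerivAt_pow n t).const_mul (muC p n))

lemma hasDerivAt_SA (p : ℝ) (hp : p ≠ 0) (N : ℕ) (ht : 0 < t) :
    HasDerivAt (SAf p N) ((p / 2) * SDf p N t / wf t) t := by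
  have hw := wf_pos ht
  have hA : HasDerivAt (psiFun p)
      ((p / 2) * xf t ^ (p / 2) / wf t - (p / 2) * yf t ^ (p / 2) / wf t) t := by
    have h := (hasDerivAt_xfp p ht).fun_add (hasDerivAt_yfp p ht)
    have h2 : HasDerivAt (psiFun p)
        ((p / 2) * xf t ^ (p / 2) / wf t + -((p / 2) * yf t ^ (p / 2) / wf t)) t := h
    convert h2 using 1
    try ring
  have := hA.fun_sub (hasDerivAt_aP p hp N ht)
  convert! this using 1
  rw [SDf]
  field_simp
  ring

lemma hasDerivAt_SD (p : ℝ) (hp : p ≠ 0) (N : ℕ) (ht : 0 < t) :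
    HasDerivAt (SDf p N) (((p / 2) * SAf p N t + cC p N * t ^ N) / wf t) t := by
  have hw := wf_pos ht
  have hD : HasDerivAt (fun s => xf s ^ (p / 2) - yf s ^ (p / 2))
      ((p / 2) * xf t ^ (p / 2) / wf t + (p / 2) * yf t ^ (p / 2) / wf t) t := by
    have := (hasDerivAt_xfp p ht).fun_sub (hasDerivAt_yfp p ht)
    convert! this using 1; ring
  have hwb : HasDerivAt (fun s => (wf s / 2) * bP p N s)
      (((t + 2) / wf t / 2) * bP p N t
        + (wf t / 2) * (∑ n ∈ Finset.range N, muC p n * ((n : ℝ) * t ^ (n - 1)))) t :=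
    ((hasDerivAt_wf ht).div_const 2).fun_mul (hasDerivAt_bP p N t)
  have := hD.fun_sub hwb
  convert! this using 1
  have hpid := polyid p hp N t
  have hsq := wf_sq ht.le
  rw [SAf, psiFun]
  rw [show (1 + (t + Real.sqrt (t ^ 2 + 4 * t)) / 2) = xf t from rfl,
      show (1 + (t - Real.sqrt (t ^ 2 + 4 * t)) / 2) = yf t from rfl]
  field_simp
  have hS : (∑ n ∈ Finset.range N, muC p n * (n : ℝ) * t ^ (n - 1))
      = ∑ n ∈ Finset.range N, muC p n * ((n : ℝ) * t ^ (n - 1)) :=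
    Finset.sum_congr rfl fun n _ => by ring
  linear_combination hpid
    + ((∑ n ∈ Finset.range N, muC p n * ((n : ℝ) * t ^ (n - 1)))) * hsq + wf t ^ 2 * hS
end basic

lemma cont_wf : Continuous wf := by
  apply Real.continuous_sqrt.comp; continuity
lemma cont_xf : Continuous xf :=
  continuous_const.add ((continuous_id.add cont_wf).div_const 2)
lemma cont_yf : Continuous yf :=
  continuous_const.add ((continuous_id.sub cont_wf).div_const 2)
lemma cont_xfp (p : ℝ) (hp : 0 < p) : Continuous fun t => xf t ^ (p / 2) :=
  cont_xf.rpow_const fun _ => Or.inr (by linarith)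
lemma cont_yfp (p : ℝ) (hp : 0 < p) : Continuous fun t => yf t ^ (p / 2) :=
  cont_yf.rpow_const fun _ => Or.inr (by linarith)
lemma cont_aP (p : ℝ) (N : ℕ) : Continuous (aP p N) := by
  unfold aP; exact continuous_finset_sum _ fun n _ => by continuity
lemma cont_bP (p : ℝ) (N : ℕ) : Continuous (bP p N) := by
  unfold bP; exact continuous_finset_sum _ fun n _ => by continuity
lemma cont_psiFun (p : ℝ) (hp : 0 < p) : Continuous (psiFun p) := by
  have : psiFun p = fun t => xf t ^ (p / 2) + yf t ^ (p / 2) := rfl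
  rw [this]; exact (cont_xfp p hp).add (cont_yfp p hp)
lemma cont_SA (p : ℝ) (hp : 0 < p) (N : ℕ) : Continuous (SAf p N) :=
  (cont_psiFun p hp).sub (cont_aP p N)
lemma cont_SD (p : ℝ) (hp : 0 < p) (N : ℕ) : Continuous (SDf p N) :=
  ((cont_xfp p hp).sub (cont_yfp p hp)).sub ((cont_wf.div_const 2).mul (cont_bP p N))

lemma aP_zero (p : ℝ) (N : ℕ) : aP p N 0 = 2 := by
  unfold aP
  rw [Finset.sum_eq_single 0]
  · simp [psiCoeff_zero]
  · intro n _ hn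
    rcases Nat.exists_eq_succ_of_ne_zero hn with ⟨m, rfl⟩
    simp
  · simp
lemma SAf_zero (p : ℝ) (N : ℕ) : SAf p N 0 = 0 := by
  have : psiFun p 0 = xf 0 ^ (p / 2) + yf 0 ^ (p / 2) := rfl
  rw [SAf, this, xf_one, yf_one, Real.one_rpow, aP_zero]; ring
lemma SDf_zero (p : ℝ) (N : ℕ) : SDf p N 0 = 0 := by
  rw [SDf, xf_one, yf_one, wf_zero]; ring

lemma mono_aux {f f' : ℝ → ℝ} {T : ℝ} (hT : 0 < T)
    (hc : ContinuousOn f (Set.Icc 0 T))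
    (hd : ∀ s ∈ Set.Ioo (0:ℝ) T, HasDerivAt f (f' s) s)
    (h0 : ∀ s ∈ Set.Ioo (0:ℝ) T, 0 ≤ f' s) : f 0 ≤ f T := by
  have hD : DifferentiableOn ℝ f (interior (Set.Icc 0 T)) := by
    rw [interior_Icc]; intro s hs
    exact (hd s hs).differentiableAt.differentiableWithinAt
  have hnn : ∀ s ∈ interior (Set.Icc (0:ℝ) T), 0 ≤ deriv f s := by
    rw [interior_Icc]; intro s hs
    rw [(hd s hs).deriv]; exact h0 s hs
  exact monotoneOn_of_deriv_nonneg (convex_Icc 0 T) hc hD hnn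
    (Set.left_mem_Icc.2 hT.le) (Set.right_mem_Icc.2 hT.le) hT.le

lemma core (p : ℝ) (hp : 0 < p) (N : ℕ) {ε : ℝ} (hε : ε = 1 ∨ ε = -1)
    (hc : 0 ≤ ε * cC p N) {t : ℝ} (ht : 0 ≤ t) : 0 ≤ ε * SAf p N t := by
  have hpne := hp.ne'
  rcases eq_or_lt_of_le ht with h0 | h0
  · rw [← h0, SAf_zero]; ring_nf; exact le_refl 0
  -- U part
  have hεc : Continuous fun s => ε * (SDf p N s - SAf p N s) :=
    (continuous_const.mul ((cont_SD p hp N).sub (cont_SA p hp N)))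
  have hU : ∀ s : ℝ, 0 < s → 0 ≤ ε * (SDf p N s - SAf p N s) := by
    intro s hs
    have hF0 : (fun r => xf r ^ (p / 2) * (ε * (SDf p N r - SAf p N r))) 0 = 0 := by
      simp [SDf_zero, SAf_zero, xf_one]
    have hstep := mono_aux (f := fun r => xf r ^ (p / 2) * (ε * (SDf p N r - SAf p N r)))
      (f' := fun r => xf r ^ (p / 2) * (ε * cC p N) * r ^ N / wf r) hs
      (((cont_xfp p hp).mul hεc).continuousOn)
      (fun r hr => by
        have hw := wf_pos hr.1
        have hd := (hasDerivAt_xfp p hr.1).fun_mul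
          (((hasDerivAt_SD p hpne N hr.1).fun_sub (hasDerivAt_SA p hpne N hr.1)).const_mul ε)
        convert! hd using 1
        field_simp
        ring)
      (fun r hr => by
        have hw := wf_pos hr.1
        have hx := Real.rpow_pos_of_pos (xf_pos hr.1.le) (p / 2)
        have hrN : (0:ℝ) ≤ r ^ N := pow_nonneg hr.1.le N
        positivity)
    rw [show xf 0 ^ (p / 2) * (ε * (SDf p N 0 - SAf p N 0)) = 0 from hF0] at hstep
    have hx := Real.rpow_pos_of_pos (xf_pos hs.le) (p / 2)
    nlinarith [hstep]
  -- V part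
  have hεcV : Continuous fun s => ε * (SDf p N s + SAf p N s) :=
    (continuous_const.mul ((cont_SD p hp N).add (cont_SA p hp N)))
  have hV : ∀ s : ℝ, 0 < s → 0 ≤ ε * (SDf p N s + SAf p N s) := by
    intro s hs
    have hF0 : (fun r => yf r ^ (p / 2) * (ε * (SDf p N r + SAf p N r))) 0 = 0 := by
      simp [SDf_zero, SAf_zero, yf_one]
    have hstep := mono_aux (f := fun r => yf r ^ (p / 2) * (ε * (SDf p N r + SAf p N r)))
      (f' := fun r => yf r ^ (p / 2) * (ε * cC p N) * r ^ N / wf r) hs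
      (((cont_yfp p hp).mul hεcV).continuousOn)
      (fun r hr => by
        have hw := wf_pos hr.1
        have hd := (hasDerivAt_yfp p hr.1).fun_mul
          (((hasDerivAt_SD p hpne N hr.1).fun_add (hasDerivAt_SA p hpne N hr.1)).const_mul ε)
        convert! hd using 1
        field_simp
        ring)
      (fun r hr => by
        have hw := wf_pos hr.1
        have hy := Real.rpow_pos_of_pos (yf_pos hr.1.le) (p / 2)
        have hrN : (0:ℝ) ≤ r ^ N := pow_nonneg hr.1.le N
        positivity)
    rw [show yf 0 ^ (p / 2) * (ε * (SDf p N 0 + SAf p N 0)) = 0 from hF0] at hstep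
    have hy := Real.rpow_pos_of_pos (yf_pos hs.le) (p / 2)
    nlinarith [hstep]
  -- SD sign
  have hSD : ∀ s : ℝ, 0 < s → 0 ≤ ε * SDf p N s := by
    intro s hs
    have := hU s hs
    have := hV s hs
    nlinarith
  -- final
  have hstep := mono_aux (f := fun s => ε * SAf p N s)
    (f' := fun s => ε * ((p / 2) * SDf p N s / wf s)) h0
    (continuous_const.mul (cont_SA p hp N)).continuousOn
    (fun s hs => (hasDerivAt_SA p hpne N hs.1).const_mul ε)
    (fun s hs => by
      have hw := wf_pos hs.1
      have := hSD s hs.1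
      show 0 ≤ ε * ((p / 2) * SDf p N s / wf s)
      have hh : ε * ((p / 2) * SDf p N s / wf s) = (p / 2) * (ε * SDf p N s) / wf s := by ring
      rw [hh]
      positivity)
  simpa [SAf_zero] using hstep

lemma prod_sign_pos (p : ℝ) (hp : 0 < p) (N : ℕ)
    (h : 2 * (N : ℝ) ≤ p ∨ Odd ⌊(N : ℝ) - p / 2⌋) :
    0 ≤ ∏ k ∈ Finset.range (N + 1), (p ^ 2 / 4 - (k : ℝ) ^ 2) := by
  by_cases hle : 2 * (N : ℝ) ≤ p
  · apply Finset.prod_nonneg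
    intro k hk
    have hk' : (k : ℝ) ≤ N := by
      exact_mod_cast Nat.lt_succ_iff.1 (Finset.mem_range.1 hk)
    have : (k:ℝ) ≤ p / 2 := by linarith
    nlinarith [Nat.cast_nonneg (α := ℝ) k]
  · rcases h with h | h
    · exact absurd h hle
    push_neg at hle
    by_cases hint : ∃ j ∈ Finset.range (N + 1), (j : ℝ) = p / 2
    · obtain ⟨j, hj, hje⟩ := hint
      rw [Finset.prod_eq_zero hj (by nlinarith : p ^ 2 / 4 - (j:ℝ)^2 = 0)]
    · -- p/2 not an integer ≤ N
      push_neg at hint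
      set m := ⌊p / 2⌋₊ with hm
      have hm_le : (m : ℝ) ≤ p / 2 := Nat.floor_le (by linarith)
      have hm_lt : p / 2 < (m : ℝ) + 1 := Nat.lt_floor_add_one _
      have hmN : m < N := by
        have : (m : ℝ) < N := by linarith
        exact_mod_cast this
      have hm_ne : (m : ℝ) ≠ p / 2 := hint m (Finset.mem_range.2 (by omega))
      have hm_strict : (m : ℝ) < p / 2 := lt_of_le_of_ne hm_le hm_ne
      -- floor value
      have hfloor : ⌊(N : ℝ) - p / 2⌋ = (N : ℤ) - m - 1 := by
        apply Int.floor_eq_iff.2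
        constructor
        · push_cast; linarith
        · push_cast; linarith
      rw [hfloor] at h
      -- parity: N - m is even
      have hpar : Even (N - m) := by
        obtain ⟨r, hr⟩ := h
        have : (N : ℤ) - m = 2 * r + 2 := by omega
        have h2 : ((N - m : ℕ) : ℤ) = 2 * r + 2 := by
          rw [Nat.cast_sub hmN.le]; omega
        have : Even ((N - m : ℕ) : ℤ) := by rw [h2]; exact ⟨r + 1, by ring⟩
        exact_mod_cast this
      -- split the product
      rw [← Finset.prod_range_mul_prod_Ico _ (by omega : m + 1 ≤ N + 1)]
      have h1 : 0 ≤ ∏ k ∈ Finset.range (m + 1), (p ^ 2 / 4 - (k : ℝ) ^ 2) := by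
        apply Finset.prod_nonneg
        intro k hk
        have : (k : ℝ) ≤ m := by exact_mod_cast Nat.lt_succ_iff.1 (Finset.mem_range.1 hk)
        nlinarith [Nat.cast_nonneg (α := ℝ) k]
      have h2 : 0 ≤ ∏ k ∈ Finset.Ico (m + 1) (N + 1), (p ^ 2 / 4 - (k : ℝ) ^ 2) := by
        have heq : ∏ k ∈ Finset.Ico (m + 1) (N + 1), (p ^ 2 / 4 - (k : ℝ) ^ 2)
            = (-1 : ℝ) ^ (Finset.Ico (m + 1) (N + 1)).card
              * ∏ k ∈ Finset.Ico (m + 1) (N + 1), ((k : ℝ) ^ 2 - p ^ 2 / 4) := by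
          rw [← Finset.prod_const, ← Finset.prod_mul_distrib]
          exact Finset.prod_congr rfl fun k _ => by ring
        rw [heq, Nat.card_Ico]
        have hcard : N + 1 - (m + 1) = N - m := by omega
        rw [hcard, hpar.neg_one_pow, one_mul]
        apply Finset.prod_nonneg
        intro k hk
        have hk1 : m + 1 ≤ k := (Finset.mem_Ico.1 hk).1
        have : (m : ℝ) + 1 ≤ k := by exact_mod_cast hk1
        nlinarith
      exact mul_nonneg h1 h2

lemma prod_sign_neg (p : ℝ) (hp : 0 < p) (N : ℕ)
    (h : ¬(2 * (N : ℝ) ≤ p ∨ Odd ⌊(N : ℝ) - p / 2⌋)) :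
    ∏ k ∈ Finset.range (N + 1), (p ^ 2 / 4 - (k : ℝ) ^ 2) ≤ 0 := by
  push_neg at h
  obtain ⟨hle, hodd⟩ := h
  rw [Int.not_odd_iff_even] at hodd
  by_cases hint : ∃ j ∈ Finset.range (N + 1), (j : ℝ) = p / 2
  · obtain ⟨j, hj, hje⟩ := hint
    rw [Finset.prod_eq_zero hj (by nlinarith : p ^ 2 / 4 - (j:ℝ)^2 = 0)]
  · push_neg at hint
    set m := ⌊p / 2⌋₊ with hm
    have hm_le : (m : ℝ) ≤ p / 2 := Nat.floor_le (by linarith)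
    have hm_lt : p / 2 < (m : ℝ) + 1 := Nat.lt_floor_add_one _
    have hmN : m < N := by
      have : (m : ℝ) < N := by linarith
      exact_mod_cast this
    have hm_ne : (m : ℝ) ≠ p / 2 := hint m (Finset.mem_range.2 (by omega))
    have hm_strict : (m : ℝ) < p / 2 := lt_of_le_of_ne hm_le hm_ne
    have hfloor : ⌊(N : ℝ) - p / 2⌋ = (N : ℤ) - m - 1 := by
      apply Int.floor_eq_iff.2
      constructor
      · push_cast; linarith
      · push_cast; linarith
    rw [hfloor] at hodd
    have hpar : Odd (N - m) := by
      obtain ⟨r, hr⟩ := hodd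
      have h2 : ((N - m : ℕ) : ℤ) = 2 * r + 1 := by
        rw [Nat.cast_sub hmN.le]; omega
      have : Odd ((N - m : ℕ) : ℤ) := ⟨r, by omega⟩
      exact_mod_cast this
    rw [← Finset.prod_range_mul_prod_Ico _ (by omega : m + 1 ≤ N + 1)]
    have h1 : 0 ≤ ∏ k ∈ Finset.range (m + 1), (p ^ 2 / 4 - (k : ℝ) ^ 2) := by
      apply Finset.prod_nonneg
      intro k hk
      have : (k : ℝ) ≤ m := by exact_mod_cast Nat.lt_succ_iff.1 (Finset.mem_range.1 hk)
      nlinarith [Nat.cast_nonneg (α := ℝ) k]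
    have h2 : ∏ k ∈ Finset.Ico (m + 1) (N + 1), (p ^ 2 / 4 - (k : ℝ) ^ 2) ≤ 0 := by
      have heq : ∏ k ∈ Finset.Ico (m + 1) (N + 1), (p ^ 2 / 4 - (k : ℝ) ^ 2)
          = (-1 : ℝ) ^ (Finset.Ico (m + 1) (N + 1)).card
            * ∏ k ∈ Finset.Ico (m + 1) (N + 1), ((k : ℝ) ^ 2 - p ^ 2 / 4) := by
        rw [← Finset.prod_const, ← Finset.prod_mul_distrib]
        exact Finset.prod_congr rfl fun k _ => by ring
      rw [heq, Nat.card_Ico]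
      have hcard : N + 1 - (m + 1) = N - m := by omega
      rw [hcard, hpar.neg_one_pow]
      have hpos : 0 ≤ ∏ k ∈ Finset.Ico (m + 1) (N + 1), ((k : ℝ) ^ 2 - p ^ 2 / 4) := by
        apply Finset.prod_nonneg
        intro k hk
        have hk1 : m + 1 ≤ k := (Finset.mem_Ico.1 hk).1
        have : (m : ℝ) + 1 ≤ k := by exact_mod_cast hk1
        nlinarith
      nlinarith
    exact mul_nonpos_of_nonneg_of_nonpos h1 h2

/-- For `0 < p < ∞`, `t ≥ 0` and `N ≥ 0`: the remainder `ψ(t) − Σ_{n=0}^N λ_n tⁿ` is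
nonnegative if `p ≥ 2N` or `⌊N − p/2⌋` is odd, and nonpositive otherwise. -/
theorem psi_remainder_sign (p : ℝ) (hp : 0 < p) (t : ℝ) (ht : 0 ≤ t) (N : ℕ) :
    ((2 * (N : ℝ) ≤ p ∨ Odd ⌊(N : ℝ) - p / 2⌋) →
      0 ≤ psiFun p t - ∑ n ∈ Finset.range (N + 1), psiCoeff p n * t ^ n) ∧
    (¬(2 * (N : ℝ) ≤ p ∨ Odd ⌊(N : ℝ) - p / 2⌋) →
      psiFun p t - ∑ n ∈ Finset.range (N + 1), psiCoeff p n * t ^ n ≤ 0) := by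
  have hrem : psiFun p t - ∑ n ∈ Finset.range (N + 1), psiCoeff p n * t ^ n = SAf p N t := rfl
  rw [hrem]
  have hfacpos : (0:ℝ) < 2 / (Nat.factorial (2 * (N + 1)) : ℝ) := by
    have : (0:ℝ) < (Nat.factorial (2 * (N + 1)) : ℝ) := by
      exact_mod_cast Nat.factorial_pos _
    positivity
  constructor
  · intro h
    have hPr := prod_sign_pos p hp N h
    have hcoef : 0 ≤ psiCoeff p (N + 1) := by
      rw [psiCoeff]; exact mul_nonneg hfacpos.le hPr
    have hcC : 0 ≤ cC p N := by
      rw [cC, muC]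
      have h4p : (0:ℝ) ≤ 4 / p := by positivity
      have : (0:ℝ) ≤ 2 * (N:ℝ) + 1 := by positivity
      have : (0:ℝ) ≤ ((N:ℝ) + 1) := by positivity
      positivity
    have := core p hp N (ε := 1) (Or.inl rfl) (by simpa using hcC) ht
    simpa using this
  · intro h
    have hPr := prod_sign_neg p hp N h
    have hcoef : psiCoeff p (N + 1) ≤ 0 := by
      rw [psiCoeff]
      exact mul_nonpos_of_nonneg_of_nonpos hfacpos.le hPr
    have hcC : cC p N ≤ 0 := by
      rw [cC, muC]
      have h4p : (0:ℝ) ≤ 4 / p := by positivity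
      have hb : (0:ℝ) ≤ (2 * (N:ℝ) + 1) * ((4 / p) * ((N:ℝ) + 1)) := by positivity
      nlinarith
    have := core p hp N (ε := -1) (Or.inr rfl) (by simpa using hcC) ht
    linarith [this]
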